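/- Let A ∈ ℝ^{n×n}, T ∈ ℝ^{n×m}, K ∈ ℝ^{q×n}, ϱ > 0, and let P ∈ ℝ^{n×n} be symmetric positive definite. Then the following are equivalent: (i) for every F ∈ ℝ^{m×q} with FᵀF ⪯ ϱ²·I_q, the matrix P(A + T F K)ᵀ + (A + T F K)P is negative definite; (ii) there exists a scalar q₀ > 0 such that P Aᵀ + A P + (1/q₀)·P Kᵀ K P + q₀·ϱ²·T Tᵀ is negative definite. -/

import Mathlib

open Matrix

noncomputable section


section MoreHelpers

lemma pair_alg (f₁ f₁₂ f₂ g₁ g₁₂ g₂ : ℝ) (hg₁ : 0 < g₁) (hg₂ : g₂ < 0) (hf₂ : 0 ≤ f₂)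
    (H : ∀ σ : ℝ, g₁ * σ ^ 2 + g₁₂ * σ + g₂ = 0 → f₁ * σ ^ 2 + f₁₂ * σ + f₂ < 0) :
    f₂ * g₁ < f₁ * g₂ := by
  set D : ℝ := g₁₂ ^ 2 - 4 * g₁ * g₂ with hD
  have hDpos : 0 < D := by nlinarith
  have hsD : Real.sqrt D ^ 2 = D := Real.sq_sqrt hDpos.le
  have hsDpos : 0 < Real.sqrt D := Real.sqrt_pos.mpr hDpos
  have habs : g₁₂ < Real.sqrt D ∧ -g₁₂ < Real.sqrt D := by
    constructor <;> nlinarith [hsD, hsDpos]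
  set σp : ℝ := (-g₁₂ + Real.sqrt D) / (2 * g₁) with hσp
  set σm : ℝ := (-g₁₂ - Real.sqrt D) / (2 * g₁) with hσm
  have h2g₁ : (2 * g₁) ≠ 0 := by positivity
  have hrootp : g₁ * σp ^ 2 + g₁₂ * σp + g₂ = 0 := by
    rw [hσp]; field_simp; nlinarith [hsD]
  have hrootm : g₁ * σm ^ 2 + g₁₂ * σm + g₂ = 0 := by
    rw [hσm]; field_simp; nlinarith [hsD]
  have hp := H σp hrootp
  have hm := H σm hrootm
  have hσppos : 0 < σp := by
    rw [hσp]
    apply div_pos (by linarith [habs.2]) (by positivity)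
  have hσmneg : σm < 0 := by
    rw [hσm]
    apply div_neg_of_neg_of_pos (by linarith [habs.1]) (by positivity)
  have key : (σp - σm) * (f₂ - f₁ * (σp * σm)) =
      (-σm) * (f₁ * σp ^ 2 + f₁₂ * σp + f₂) + σp * (f₁ * σm ^ 2 + f₁₂ * σm + f₂) := by ring
  have hlt : (σp - σm) * (f₂ - f₁ * (σp * σm)) < 0 := by
    rw [key]
    have h1 : (-σm) * (f₁ * σp ^ 2 + f₁₂ * σp + f₂) < 0 :=
      mul_neg_of_pos_of_neg (by linarith) hp
    have h2 : σp * (f₁ * σm ^ 2 + f₁₂ * σm + f₂) < 0 :=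
      mul_neg_of_pos_of_neg hσppos hm
    linarith
  have hsub : f₂ - f₁ * (σp * σm) < 0 := by
    by_contra hc
    push_neg at hc
    nlinarith
  have vieta : σp * σm * g₁ = g₂ := by
    rw [hσp, hσm]
    field_simp
    nlinarith [hsD]
  have h8 : (f₂ - f₁ * (σp * σm)) * g₁ < 0 := mul_neg_of_neg_of_pos hsub hg₁
  have h9 : f₁ * (σp * σm) * g₁ = f₁ * g₂ := by rw [mul_assoc, vieta]
  nlinarith [h8, h9]


lemma slemma {V : Type*} [NormedAddCommGroup V] [NormedSpace ℝ V] [FiniteDimensional ℝ V]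
    (f g : V → ℝ) (hfc : Continuous f) (hgc : Continuous g)
    (hfq : ∀ ξ₁ ξ₂ : V, ∃ c : ℝ, ∀ s t : ℝ,
      f (s • ξ₁ + t • ξ₂) = s ^ 2 * f ξ₁ + c * (s * t) + t ^ 2 * f ξ₂)
    (hgq : ∀ ξ₁ ξ₂ : V, ∃ c : ℝ, ∀ s t : ℝ,
      g (s • ξ₁ + t • ξ₂) = s ^ 2 * g ξ₁ + c * (s * t) + t ^ 2 * g ξ₂)
    (H : ∀ ξ : V, ξ ≠ 0 → 0 ≤ g ξ → f ξ < 0) :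
    ∃ lam : ℝ, 0 < lam ∧ ∀ ξ : V, ξ ≠ 0 → f ξ + lam * g ξ < 0 := by
  have hgh : ∀ (s : ℝ) (ξ : V), g (s • ξ) = s ^ 2 * g ξ := by
    intro s ξ
    obtain ⟨c, hc⟩ := hgq ξ 0
    have h := hc s 0
    simpa using h
  have hfh : ∀ (s : ℝ) (ξ : V), f (s • ξ) = s ^ 2 * f ξ := by
    intro s ξ
    obtain ⟨c, hc⟩ := hfq ξ 0
    have h := hc s 0
    simpa using h
  have PAIR : ∀ ξ₁ ξ₂ : V, ξ₁ ≠ 0 → 0 < g ξ₁ → g ξ₂ < 0 → 0 ≤ f ξ₂ →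
      f ξ₂ * g ξ₁ < f ξ₁ * g ξ₂ := by
    intro ξ₁ ξ₂ hξ₁ h1 h2 h3
    obtain ⟨cf, hcf⟩ := hfq ξ₁ ξ₂
    obtain ⟨cg, hcg⟩ := hgq ξ₁ ξ₂
    refine pair_alg (f ξ₁) cf (f ξ₂) (g ξ₁) cg (g ξ₂) h1 h2 h3 ?_
    intro σ hσ
    have hne : σ • ξ₁ + (1 : ℝ) • ξ₂ ≠ 0 := by
      intro h0
      have hx2 : ξ₂ = (-σ) • ξ₁ := by
        have : (1 : ℝ) • ξ₂ = -(σ • ξ₁) := by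
          rw [eq_neg_iff_add_eq_zero, add_comm]; exact h0
        rw [one_smul] at this
        rw [this, neg_smul]
      have : g ξ₂ = σ ^ 2 * g ξ₁ := by rw [hx2, hgh]; ring_nf
      nlinarith [sq_nonneg σ]
    have hgz : g (σ • ξ₁ + (1 : ℝ) • ξ₂) = 0 := by
      rw [hcg σ 1]; nlinarith [hσ]
    have hfz := H _ hne (le_of_eq hgz.symm)
    have hfv := hcf σ 1
    rw [hfv] at hfz
    nlinarith [hfz]
  -- reduce to unit sphere
  suffices hsph : ∃ lam : ℝ, 0 < lam ∧ ∀ ξ : V, ‖ξ‖ = 1 → f ξ + lam * g ξ < 0 by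
    obtain ⟨lam, hl, hall⟩ := hsph
    refine ⟨lam, hl, fun ξ hξ => ?_⟩
    have hn : ‖ξ‖ ≠ 0 := norm_ne_zero_iff.mpr hξ
    have hnpos : 0 < ‖ξ‖ := norm_pos_iff.mpr hξ
    set u : V := ‖ξ‖⁻¹ • ξ with hu
    have hu1 : ‖u‖ = 1 := by
      rw [hu, norm_smul, norm_inv, norm_norm, inv_mul_cancel₀ hn]
    have hsu : ‖ξ‖ • u = ξ := by
      rw [hu, smul_smul, mul_inv_cancel₀ hn, one_smul]
    have hfe : f ξ = ‖ξ‖ ^ 2 * f u := by rw [← hsu, hfh, hsu]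
    have hge : g ξ = ‖ξ‖ ^ 2 * g u := by rw [← hsu, hgh, hsu]
    have h1 := hall u hu1
    have h2 : 0 < ‖ξ‖ ^ 2 := by positivity
    rw [hfe, hge]
    nlinarith [h1, h2]
  set S : Set V := Metric.sphere (0 : V) 1 with hS
  have hSc : IsCompact S := isCompact_sphere 0 1
  have hSnorm : ∀ ξ ∈ S, ‖ξ‖ = 1 := fun ξ hξ => mem_sphere_zero_iff_norm.mp hξ
  have hSne : ∀ ξ ∈ S, ξ ≠ 0 := fun ξ hξ => norm_ne_zero_iff.mp (by rw [hSnorm ξ hξ]; norm_num)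
  by_cases hSnonempty : S.Nonempty
  swap
  · exact ⟨1, one_pos, fun ξ hξ => absurd ⟨ξ, mem_sphere_zero_iff_norm.mpr hξ⟩ hSnonempty⟩
  by_cases hSp : (S ∩ {ξ | 0 ≤ g ξ}).Nonempty
  swap
  · -- g < 0 everywhere on the sphere
    have hgneg : ∀ ξ ∈ S, g ξ < 0 := by
      intro ξ hξ
      by_contra hc
      exact hSp ⟨ξ, hξ, by simpa using not_lt.mp hc⟩
    have hlc : ContinuousOn (fun ξ => f ξ / (-g ξ)) S :=
      ContinuousOn.div hfc.continuousOn hgc.neg.continuousOn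
        (fun ξ hξ => ne_of_gt (neg_pos.mpr (hgneg ξ hξ)))
    obtain ⟨ξ0, hξ0, hmax⟩ := hSc.exists_isMaxOn hSnonempty hlc
    have hmax' := isMaxOn_iff.mp hmax
    refine ⟨max (f ξ0 / (-g ξ0)) 0 + 1, by positivity, fun ξ hξn => ?_⟩
    have hξS : ξ ∈ S := mem_sphere_zero_iff_norm.mpr hξn
    have hg := hgneg ξ hξS
    have h2 : f ξ / (-g ξ) < max (f ξ0 / (-g ξ0)) 0 + 1 := by
      have h1 : f ξ / (-g ξ) ≤ f ξ0 / (-g ξ0) := hmax' ξ hξS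
      have := le_max_left (f ξ0 / (-g ξ0)) (0:ℝ)
      linarith
    have h3 : f ξ < (max (f ξ0 / (-g ξ0)) 0 + 1) * (-g ξ) :=
      (div_lt_iff₀ (neg_pos.mpr hg)).mp h2
    linarith
  -- main branch
  set Splus : Set V := S ∩ {ξ | 0 ≤ g ξ} with hSplus
  have hSplusC : IsCompact Splus := hSc.inter_right (isClosed_le continuous_const hgc)
  obtain ⟨ξδ, hξδ, hmaxf⟩ := hSplusC.exists_isMaxOn hSp hfc.continuousOn
  have hmaxf' := isMaxOn_iff.mp hmaxf
  set δ : ℝ := -(f ξδ) with hδdef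
  have hδ : 0 < δ := by
    have := H ξδ (hSne _ hξδ.1) hξδ.2
    rw [hδdef]; linarith
  have hfδ : ∀ ξ ∈ Splus, f ξ ≤ -δ := by
    intro ξ h
    have := hmaxf' ξ h
    rw [hδdef]; linarith
  set U : Set V := S ∩ {ξ | g ξ ≤ 0 ∧ 0 ≤ f ξ} with hUdef
  have hUc : IsCompact U := hSc.inter_right
    ((isClosed_le hgc continuous_const).inter (isClosed_le continuous_const hfc))
  have hUneg : ∀ ξ ∈ U, g ξ < 0 := by
    intro ξ h
    rcases lt_or_eq_of_le h.2.1 with h' | h'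
    · exact h'
    · exact absurd (H ξ (hSne _ h.1) (le_of_eq h'.symm)) (not_lt.mpr h.2.2)
  have hA : ∃ Aval : ℝ, 0 ≤ Aval ∧ (∀ ξ ∈ U, f ξ / (-g ξ) ≤ Aval) ∧
      (∀ ξ₁ ∈ S, 0 < g ξ₁ → Aval < -f ξ₁ / g ξ₁) := by
    by_cases hU : U.Nonempty
    · have hlc : ContinuousOn (fun ξ => f ξ / (-g ξ)) U :=
        ContinuousOn.div hfc.continuousOn hgc.neg.continuousOn
          (fun ξ hξ => ne_of_gt (neg_pos.mpr (hUneg ξ hξ)))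
      obtain ⟨ξA, hξA, hmaxl⟩ := hUc.exists_isMaxOn hU hlc
      have hmaxl' := isMaxOn_iff.mp hmaxl
      have hgA := hUneg ξA hξA
      refine ⟨f ξA / (-g ξA), div_nonneg hξA.2.2 (by linarith), hmaxl', ?_⟩
      intro ξ₁ hξ₁ hg₁
      have hpair := PAIR ξ₁ ξA (hSne _ hξ₁) hg₁ hgA hξA.2.2
      rw [div_lt_div_iff₀ (neg_pos.mpr hgA) hg₁]
      nlinarith [hpair]
    · refine ⟨0, le_refl 0, fun ξ h => absurd ⟨ξ, h⟩ hU, ?_⟩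
      intro ξ₁ hξ₁ hg₁
      have hf₁ : f ξ₁ ≤ -δ := hfδ ξ₁ ⟨hξ₁, hg₁.le⟩
      exact div_pos (by linarith) hg₁
  obtain ⟨A, hA0, hAub, hAlt⟩ := hA
  set ε : ℝ := δ / (A + 1) with hεdef
  have hεpos : 0 < ε := div_pos hδ (by linarith)
  have hεA : δ / ε = A + 1 := by
    rw [hεdef]
    field_simp
  set Kset : Set V := S ∩ {ξ | ε ≤ g ξ} with hKdef
  have hKc : IsCompact Kset := hSc.inter_right (isClosed_le continuous_const hgc)
  have hB : ∃ Bval : ℝ, A < Bval ∧ Bval ≤ A + 1 ∧ ∀ ξ ∈ Kset, Bval ≤ -f ξ / g ξ := by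
    by_cases hK : Kset.Nonempty
    · have hrc : ContinuousOn (fun ξ => -f ξ / g ξ) Kset :=
        ContinuousOn.div hfc.neg.continuousOn hgc.continuousOn
          (fun ξ hξ => ne_of_gt (lt_of_lt_of_le hεpos hξ.2))
      obtain ⟨ξK, hξK, hminr⟩ := hKc.exists_isMinOn hK hrc
      have hminr' := isMinOn_iff.mp hminr
      refine ⟨min (-f ξK / g ξK) (A + 1), ?_, min_le_right _ _, ?_⟩
      · exact lt_min (hAlt ξK hξK.1 (lt_of_lt_of_le hεpos hξK.2)) (by linarith)
      · intro ξ hξ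
        exact le_trans (min_le_left _ _) (hminr' ξ hξ)
    · exact ⟨A + 1, by linarith, le_refl _, fun ξ h => absurd ⟨ξ, h⟩ hK⟩
  obtain ⟨B, hAB, hBA1, hBlb⟩ := hB
  refine ⟨(A + B) / 2, by linarith, fun ξ hξn => ?_⟩
  have hξS : ξ ∈ S := mem_sphere_zero_iff_norm.mpr hξn
  have hlamA : A < (A + B) / 2 := by linarith
  have hlamB : (A + B) / 2 < B := by linarith
  rcases lt_trichotomy (g ξ) 0 with hg | hg | hg
  · by_cases hf0 : 0 ≤ f ξ
    · have hmem : ξ ∈ U := ⟨hξS, hg.le, hf0⟩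
      have h1 : f ξ / (-g ξ) < (A + B) / 2 := lt_of_le_of_lt (hAub ξ hmem) hlamA
      have h2 : f ξ < ((A + B) / 2) * (-g ξ) := (div_lt_iff₀ (neg_pos.mpr hg)).mp h1
      linarith
    · push_neg at hf0
      have : ((A + B) / 2) * g ξ < 0 := mul_neg_of_pos_of_neg (by linarith) hg
      linarith
  · have := H ξ (hSne _ hξS) (le_of_eq hg.symm)
    rw [hg, mul_zero, add_zero]
    exact this
  · have hfle : f ξ ≤ -δ := hfδ ξ ⟨hξS, hg.le⟩
    have hlr : (A + B) / 2 < -f ξ / g ξ := by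
      by_cases hKε : ε ≤ g ξ
      · exact lt_of_lt_of_le hlamB (hBlb ξ ⟨hξS, hKε⟩)
      · push_neg at hKε
        have h2 : δ / ε < δ / g ξ := div_lt_div_of_pos_left hδ hg hKε
        have h3 : δ / g ξ ≤ -f ξ / g ξ := (div_le_div_iff_of_pos_right hg).mpr (by linarith)
        linarith
    have := (lt_div_iff₀ hg).mp hlr
    linarith


variable {k l : ℕ}

lemma dot_self_nonneg' (v : Fin k → ℝ) : 0 ≤ v ⬝ᵥ v :=
  Finset.sum_nonneg fun _ _ => mul_self_nonneg _

lemma dot_cs' (v u : Fin k → ℝ) : (v ⬝ᵥ u) ^ 2 ≤ (v ⬝ᵥ v) * (u ⬝ᵥ u) := by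
  have := Finset.sum_mul_sq_le_sq_mul_sq Finset.univ v u
  simpa [dotProduct, sq] using this

lemma dot_transpose_quad (M : Matrix (Fin k) (Fin k) ℝ) (x : Fin k → ℝ) :
    x ⬝ᵥ (Mᵀ *ᵥ x) = x ⬝ᵥ (M *ᵥ x) := by
  rw [mulVec_transpose, dotProduct_comm, ← dotProduct_mulVec]

lemma dot_mul_transpose (M : Matrix (Fin k) (Fin l) ℝ) (x : Fin k → ℝ)
    (z : Fin l → ℝ) : x ⬝ᵥ (M *ᵥ z) = (Mᵀ *ᵥ x) ⬝ᵥ z := by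
  rw [dotProduct_mulVec, mulVec_transpose]

lemma isHerm_of_symm {M : Matrix (Fin k) (Fin k) ℝ} (h : Mᵀ = M) : M.IsHermitian := by
  rwa [Matrix.IsHermitian, conjTranspose_eq_transpose_of_trivial]

lemma posdef_real_iff (M : Matrix (Fin k) (Fin k) ℝ) :
    M.PosDef ↔ M.IsHermitian ∧ ∀ x : Fin k → ℝ, x ≠ 0 → 0 < x ⬝ᵥ (M *ᵥ x) := by
  rw [posDef_iff_dotProduct_mulVec]
  simp [star_trivial]

lemma quad_pair (Pm Sm : Matrix (Fin k) (Fin k) ℝ) (hp : Pmᵀ = Pm) (x : Fin k → ℝ) :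
    x ⬝ᵥ ((Pm * Smᵀ + Sm * Pm) *ᵥ x) = 2 * (x ⬝ᵥ ((Sm * Pm) *ᵥ x)) := by
  have h1 : Pm * Smᵀ = (Sm * Pm)ᵀ := by rw [transpose_mul, hp]
  rw [add_mulVec, dotProduct_add, h1, dot_transpose_quad]; ring

lemma amgm_dot (c X Z D : ℝ) (hc : 0 < c) (hX : 0 ≤ X) (hZ : 0 ≤ Z) (hCS : D ^ 2 ≤ X * Z) :
    2 * D ≤ c * X + Z / c := by
  have key : 2 * (c * D) ≤ c ^ 2 * X + Z := by
    by_contra hcon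
    push_neg at hcon
    have h5 : 0 ≤ c ^ 2 * X + Z := by positivity
    have h6 : 0 < 2 * (c * D) := lt_of_le_of_lt h5 hcon
    have h7 : (c ^ 2 * X + Z) ^ 2 < (2 * (c * D)) ^ 2 := by nlinarith [hcon, h5, h6]
    have h8 : (2 * (c * D)) ^ 2 ≤ 4 * c ^ 2 * (X * Z) := by nlinarith [hCS, mul_pos hc hc]
    nlinarith [sq_nonneg (c ^ 2 * X - Z), h7, h8]
  have hZc : Z / c * c = Z := div_mul_cancel₀ Z (ne_of_gt hc)
  nlinarith [key, hZc, hc]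


lemma cont_dot2 {X : Type*} [TopologicalSpace X] {u w : X → Fin k → ℝ}
    (hu : Continuous u) (hw : Continuous w) : Continuous fun x => u x ⬝ᵥ w x := by
  simp only [dotProduct]
  exact continuous_finset_sum _ fun i _ =>
    ((continuous_apply i).comp hu).mul ((continuous_apply i).comp hw)

lemma cont_mulVec {X : Type*} [TopologicalSpace X] (M : Matrix (Fin k) (Fin l) ℝ)
    {w : X → Fin l → ℝ} (hw : Continuous w) : Continuous fun x => M *ᵥ (w x) := by
  apply continuous_pi; intro i
  simp only [mulVec, dotProduct]
  exact continuous_finset_sum _ fun j _ =>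
    continuous_const.mul ((continuous_apply j).comp hw)

lemma psd_iff_bound {m' q' : ℕ} (ϱ : ℝ) (F : Matrix (Fin m') (Fin q') ℝ) :
    (ϱ ^ 2 • (1 : Matrix (Fin q') (Fin q') ℝ) - Fᵀ * F).PosSemidef ↔
      ∀ u : Fin q' → ℝ, (F *ᵥ u) ⬝ᵥ (F *ᵥ u) ≤ ϱ ^ 2 * (u ⬝ᵥ u) := by
  have herm : (ϱ ^ 2 • (1 : Matrix (Fin q') (Fin q') ℝ) - Fᵀ * F).IsHermitian := by
    rw [Matrix.IsHermitian, conjTranspose_eq_transpose_of_trivial]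
    simp [transpose_sub, transpose_smul, transpose_mul, transpose_transpose]
  have key : ∀ u : Fin q' → ℝ,
      u ⬝ᵥ ((ϱ ^ 2 • (1 : Matrix (Fin q') (Fin q') ℝ) - Fᵀ * F) *ᵥ u)
        = ϱ ^ 2 * (u ⬝ᵥ u) - (F *ᵥ u) ⬝ᵥ (F *ᵥ u) := by
    intro u
    rw [sub_mulVec, dotProduct_sub, smul_mulVec, one_mulVec, dotProduct_smul,
      smul_eq_mul, ← mulVec_mulVec, dot_mul_transpose, transpose_transpose]
  constructor
  · intro h u
    have := (posSemidef_iff_dotProduct_mulVec.mp h).2 u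
    rw [star_trivial, key] at this
    linarith
  · intro h
    refine posSemidef_iff_dotProduct_mulVec.mpr ⟨herm, fun u => ?_⟩
    rw [star_trivial, key]
    linarith [h u]


end MoreHelpers

theorem robust_lyapunov_equivalence {n m q : ℕ}
    (A : Matrix (Fin n) (Fin n) ℝ) (T : Matrix (Fin n) (Fin m) ℝ)
    (K : Matrix (Fin q) (Fin n) ℝ) (ϱ : ℝ) (hϱ : 0 < ϱ)
    (P : Matrix (Fin n) (Fin n) ℝ) (hP : P.PosDef) :
    (∀ F : Matrix (Fin m) (Fin q) ℝ,
        (ϱ ^ 2 • (1 : Matrix (Fin q) (Fin q) ℝ) - Fᵀ * F).PosSemidef →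
        (-(P * (A + T * F * K)ᵀ + (A + T * F * K) * P)).PosDef) ↔
      ∃ q₀ : ℝ, 0 < q₀ ∧
        (-(P * Aᵀ + A * P + (1 / q₀) • (P * Kᵀ * K * P) + (q₀ * ϱ ^ 2) • (T * Tᵀ))).PosDef := by
  have hPsymm : Pᵀ = P := by
    have h := hP.1
    rwa [Matrix.IsHermitian, conjTranspose_eq_transpose_of_trivial] at h
  have hKPT : (K * P)ᵀ = P * Kᵀ := by rw [transpose_mul, hPsymm]
  have hPKKP : P * Kᵀ * K * P = (K * P)ᵀ * (K * P) := by
    rw [hKPT, Matrix.mul_assoc, Matrix.mul_assoc]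
  have hermLMI : ∀ c₁ c₂ : ℝ,
      (-(P * Aᵀ + A * P + c₁ • (P * Kᵀ * K * P) + c₂ • (T * Tᵀ))).IsHermitian := by
    intro c₁ c₂
    apply isHerm_of_symm
    simp only [transpose_neg, transpose_add, transpose_smul, transpose_mul,
      transpose_transpose, hPsymm, Matrix.mul_assoc]
    abel
  have hermUnc : ∀ F : Matrix (Fin m) (Fin q) ℝ,
      (-(P * (A + T * F * K)ᵀ + (A + T * F * K) * P)).IsHermitian := by
    intro F
    apply isHerm_of_symm
    simp only [transpose_neg, transpose_add, transpose_mul, transpose_transpose, hPsymm,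
      Matrix.mul_assoc]
    abel
  -- quadratic form evaluation of the uncertain Lyapunov matrix
  have quad_eval : ∀ (F : Matrix (Fin m) (Fin q) ℝ) (x : Fin n → ℝ),
      x ⬝ᵥ ((P * (A + T * F * K)ᵀ + (A + T * F * K) * P) *ᵥ x)
        = x ⬝ᵥ ((P * Aᵀ + A * P) *ᵥ x) + 2 * (x ⬝ᵥ (T *ᵥ (F *ᵥ ((K * P) *ᵥ x)))) := by
    intro F x
    rw [quad_pair P (A + T * F * K) hPsymm]
    have hexp : (A + T * F * K) * P = A * P + T * F * (K * P) := by
      rw [Matrix.add_mul, Matrix.mul_assoc]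
    have h2 : x ⬝ᵥ ((P * Aᵀ + A * P) *ᵥ x) = 2 * (x ⬝ᵥ ((A * P) *ᵥ x)) :=
      quad_pair P A hPsymm x
    have h3 : (T * F * (K * P)) *ᵥ x = T *ᵥ (F *ᵥ ((K * P) *ᵥ x)) := by
      rw [mulVec_mulVec, mulVec_mulVec]
    rw [hexp, add_mulVec, dotProduct_add, h2, h3]
    ring
  -- quadratic form evaluation of the LMI matrix
  have lmi_eval : ∀ (c₁ c₂ : ℝ) (x : Fin n → ℝ),
      x ⬝ᵥ ((P * Aᵀ + A * P + c₁ • (P * Kᵀ * K * P) + c₂ • (T * Tᵀ)) *ᵥ x)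
        = x ⬝ᵥ ((P * Aᵀ + A * P) *ᵥ x)
          + c₁ * (((K * P) *ᵥ x) ⬝ᵥ ((K * P) *ᵥ x))
          + c₂ * ((Tᵀ *ᵥ x) ⬝ᵥ (Tᵀ *ᵥ x)) := by
    intro c₁ c₂ x
    rw [add_mulVec, add_mulVec, dotProduct_add, dotProduct_add, smul_mulVec,
      smul_mulVec, dotProduct_smul, dotProduct_smul, smul_eq_mul, smul_eq_mul]
    have h1 : x ⬝ᵥ ((P * Kᵀ * K * P) *ᵥ x) = ((K * P) *ᵥ x) ⬝ᵥ ((K * P) *ᵥ x) := by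
      rw [hPKKP, ← mulVec_mulVec, dot_mul_transpose, transpose_transpose]
    have h2 : x ⬝ᵥ ((T * Tᵀ) *ᵥ x) = (Tᵀ *ᵥ x) ⬝ᵥ (Tᵀ *ᵥ x) := by
      rw [← mulVec_mulVec, dot_mul_transpose]
    rw [h1, h2]
  constructor
  · -- forward direction
    intro hFor
    set f : (Fin n → ℝ) × (Fin m → ℝ) → ℝ :=
      fun ξ => ξ.1 ⬝ᵥ ((P * Aᵀ + A * P) *ᵥ ξ.1) + 2 * (ξ.1 ⬝ᵥ (T *ᵥ ξ.2)) with hfdef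
    set g : (Fin n → ℝ) × (Fin m → ℝ) → ℝ :=
      fun ξ => ϱ ^ 2 * (((K * P) *ᵥ ξ.1) ⬝ᵥ ((K * P) *ᵥ ξ.1)) - ξ.2 ⬝ᵥ ξ.2 with hgdef
    have hfc : Continuous f :=
      (cont_dot2 continuous_fst (cont_mulVec _ continuous_fst)).add
        (continuous_const.mul (cont_dot2 continuous_fst (cont_mulVec _ continuous_snd)))
    have hgc : Continuous g :=
      ((continuous_const.mul (cont_dot2 (cont_mulVec _ continuous_fst)
        (cont_mulVec _ continuous_fst)))).sub (cont_dot2 continuous_snd continuous_snd)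
    have hfq : ∀ ξ₁ ξ₂ : (Fin n → ℝ) × (Fin m → ℝ), ∃ c : ℝ, ∀ s t : ℝ,
        f (s • ξ₁ + t • ξ₂) = s ^ 2 * f ξ₁ + c * (s * t) + t ^ 2 * f ξ₂ := by
      intro ξ₁ ξ₂
      refine ⟨ξ₁.1 ⬝ᵥ ((P * Aᵀ + A * P) *ᵥ ξ₂.1) + ξ₂.1 ⬝ᵥ ((P * Aᵀ + A * P) *ᵥ ξ₁.1)
        + 2 * (ξ₁.1 ⬝ᵥ (T *ᵥ ξ₂.2)) + 2 * (ξ₂.1 ⬝ᵥ (T *ᵥ ξ₁.2)), fun s t => ?_⟩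
      simp only [hfdef, Prod.fst_add, Prod.snd_add, Prod.smul_fst, Prod.smul_snd,
        mulVec_add, mulVec_smul, dotProduct_add, add_dotProduct, smul_dotProduct,
        dotProduct_smul, smul_eq_mul]
      ring
    have hgq : ∀ ξ₁ ξ₂ : (Fin n → ℝ) × (Fin m → ℝ), ∃ c : ℝ, ∀ s t : ℝ,
        g (s • ξ₁ + t • ξ₂) = s ^ 2 * g ξ₁ + c * (s * t) + t ^ 2 * g ξ₂ := by
      intro ξ₁ ξ₂
      refine ⟨ϱ ^ 2 * (((K * P) *ᵥ ξ₁.1) ⬝ᵥ ((K * P) *ᵥ ξ₂.1)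
          + ((K * P) *ᵥ ξ₂.1) ⬝ᵥ ((K * P) *ᵥ ξ₁.1))
        - (ξ₁.2 ⬝ᵥ ξ₂.2 + ξ₂.2 ⬝ᵥ ξ₁.2), fun s t => ?_⟩
      simp only [hgdef, Prod.fst_add, Prod.snd_add, Prod.smul_fst, Prod.smul_snd,
        mulVec_add, mulVec_smul, dotProduct_add, add_dotProduct, smul_dotProduct,
        dotProduct_smul, smul_eq_mul]
      ring
    have Hsc : ∀ ξ : (Fin n → ℝ) × (Fin m → ℝ), ξ ≠ 0 → 0 ≤ g ξ → f ξ < 0 := by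
      rintro ⟨x, w⟩ hξ hgξ
      simp only [hfdef, hgdef] at hgξ ⊢
      have hwvv : w ⬝ᵥ w ≤ ϱ ^ 2 * (((K * P) *ᵥ x) ⬝ᵥ ((K * P) *ᵥ x)) := by linarith
      have hx : x ≠ 0 := by
        rintro rfl
        rw [mulVec_zero, dotProduct_zero, mul_zero] at hwvv
        have hw0 : w = 0 := dotProduct_self_eq_zero.mp
          (le_antisymm hwvv (dot_self_nonneg' w))
        exact hξ (by simp [hw0, Prod.ext_iff])
      set vv : Fin q → ℝ := (K * P) *ᵥ x with hvvdef
      -- construct the worst-case F and apply the hypothesis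
      have key : ∀ F : Matrix (Fin m) (Fin q) ℝ,
          (ϱ ^ 2 • (1 : Matrix (Fin q) (Fin q) ℝ) - Fᵀ * F).PosSemidef → F *ᵥ vv = w →
          x ⬝ᵥ ((P * Aᵀ + A * P) *ᵥ x) + 2 * (x ⬝ᵥ (T *ᵥ w)) < 0 := by
        intro F hFpsd hFvv
        have hpd := hFor F hFpsd
        have h0 := ((posdef_real_iff _).mp hpd).2 x hx
        rw [neg_mulVec, dotProduct_neg] at h0
        have h1 := quad_eval F x
        rw [← hvvdef, hFvv] at h1
        linarith [h1, h0]
      by_cases hv : vv = 0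
      · -- then w = 0 and F = 0 works
        have hw0 : w = 0 := by
          rw [hv, zero_dotProduct, mul_zero] at hwvv
          exact dotProduct_self_eq_zero.mp (le_antisymm hwvv (dot_self_nonneg' w))
        exact key 0 ((psd_iff_bound ϱ 0).mpr (fun u => by
            rw [zero_mulVec, zero_dotProduct]
            exact mul_nonneg (by positivity) (dot_self_nonneg' u)))
          (by rw [zero_mulVec, hw0])
      · -- rank-one worst-case F
        set c : ℝ := vv ⬝ᵥ vv with hcdef
        have hcpos : 0 < c := lt_of_le_of_ne (dot_self_nonneg' vv)
          (fun h => hv (dotProduct_self_eq_zero.mp h.symm))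
        set F : Matrix (Fin m) (Fin q) ℝ := fun i j => w i * vv j / c with hFdef
        have hFu : ∀ u : Fin q → ℝ, F *ᵥ u = ((vv ⬝ᵥ u) / c) • w := by
          intro u
          funext i
          simp only [hFdef, mulVec, dotProduct, Pi.smul_apply, smul_eq_mul]
          rw [Finset.sum_congr rfl (fun j _ => by
            show w i * vv j / c * u j = (vv j * u j) * w i / c
            ring)]
          rw [← Finset.sum_div, ← Finset.sum_mul]
          ring
        have hFvv : F *ᵥ vv = w := by
          rw [hFu vv, ← hcdef, div_self (ne_of_gt hcpos), one_smul]
        refine key F ((psd_iff_bound ϱ F).mpr (fun u => ?_)) hFvv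
        rw [hFu u]
        have hcs : (vv ⬝ᵥ u) ^ 2 ≤ c * (u ⬝ᵥ u) := by
          have := dot_cs' vv u
          rwa [← hcdef] at this
        have hdot : ((vv ⬝ᵥ u) / c) • w ⬝ᵥ ((vv ⬝ᵥ u) / c) • w
            = ((vv ⬝ᵥ u) / c) ^ 2 * (w ⬝ᵥ w) := by
          rw [smul_dotProduct, dotProduct_smul, smul_eq_mul, smul_eq_mul]
          ring
        rw [hdot]
        rw [div_pow, div_mul_eq_mul_div, div_le_iff₀ (pow_pos hcpos 2)]
        calc (vv ⬝ᵥ u) ^ 2 * (w ⬝ᵥ w)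
            ≤ (c * (u ⬝ᵥ u)) * (ϱ ^ 2 * c) :=
              mul_le_mul hcs hwvv (dot_self_nonneg' w)
                (mul_nonneg hcpos.le (dot_self_nonneg' u))
          _ = ϱ ^ 2 * (u ⬝ᵥ u) * c ^ 2 := by ring
    obtain ⟨lam, hlam, hall⟩ := slemma f g hfc hgc hfq hgq Hsc
    refine ⟨1 / (lam * ϱ ^ 2), by positivity, ?_⟩
    rw [posdef_real_iff]
    refine ⟨hermLMI _ _, fun x hx => ?_⟩
    rw [neg_mulVec, dotProduct_neg]
    have hq0a : 1 / (1 / (lam * ϱ ^ 2)) = lam * ϱ ^ 2 := by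
      field_simp
    have hq0b : 1 / (lam * ϱ ^ 2) * ϱ ^ 2 = 1 / lam := by
      field_simp
    rw [lmi_eval, hq0a, hq0b]
    set ξ : (Fin n → ℝ) × (Fin m → ℝ) := (x, (1 / lam) • (Tᵀ *ᵥ x)) with hxi
    have hξne : ξ ≠ 0 := by
      intro h
      exact hx (congrArg Prod.fst h)
    have hfg := hall ξ hξne
    simp only [hfdef, hgdef, hxi] at hfg
    rw [mulVec_smul, dotProduct_smul, smul_dotProduct, dotProduct_smul,
      smul_eq_mul, smul_eq_mul, smul_eq_mul] at hfg
    have hTT : x ⬝ᵥ (T *ᵥ (Tᵀ *ᵥ x)) = (Tᵀ *ᵥ x) ⬝ᵥ (Tᵀ *ᵥ x) :=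
      dot_mul_transpose T x (Tᵀ *ᵥ x)
    rw [hTT] at hfg
    have hlamne : lam ≠ 0 := ne_of_gt hlam
    have hfinal : x ⬝ᵥ ((P * Aᵀ + A * P) *ᵥ x)
        + lam * ϱ ^ 2 * (((K * P) *ᵥ x) ⬝ᵥ ((K * P) *ᵥ x))
        + 1 / lam * ((Tᵀ *ᵥ x) ⬝ᵥ (Tᵀ *ᵥ x)) < 0 := by
      have hexp : x ⬝ᵥ ((P * Aᵀ + A * P) *ᵥ x)
          + 2 * (1 / lam * ((Tᵀ *ᵥ x) ⬝ᵥ (Tᵀ *ᵥ x)))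
          + lam * (ϱ ^ 2 * (((K * P) *ᵥ x) ⬝ᵥ ((K * P) *ᵥ x))
            - 1 / lam * (1 / lam * ((Tᵀ *ᵥ x) ⬝ᵥ (Tᵀ *ᵥ x))))
          = x ⬝ᵥ ((P * Aᵀ + A * P) *ᵥ x)
          + lam * ϱ ^ 2 * (((K * P) *ᵥ x) ⬝ᵥ ((K * P) *ᵥ x))
          + 1 / lam * ((Tᵀ *ᵥ x) ⬝ᵥ (Tᵀ *ᵥ x)) := by
        field_simp
        ring
      rw [← hexp]
      convert hfg using 2 <;> ring
    linarith [hfinal]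
  · -- backward direction
    rintro ⟨q₀, hq₀, hPD⟩ F hFpsd
    rw [posdef_real_iff]
    refine ⟨hermUnc F, fun x hx => ?_⟩
    rw [neg_mulVec, dotProduct_neg]
    rw [posdef_real_iff] at hPD
    have h0 := hPD.2 x hx
    rw [neg_mulVec, dotProduct_neg] at h0
    rw [lmi_eval (1/q₀) (q₀ * ϱ ^ 2) x] at h0
    set vv : Fin q → ℝ := (K * P) *ᵥ x with hvvdef
    set z : Fin m → ℝ := F *ᵥ vv with hzdef
    set u : Fin m → ℝ := Tᵀ *ᵥ x with hudef
    have hzb : z ⬝ᵥ z ≤ ϱ ^ 2 * (vv ⬝ᵥ vv) := (psd_iff_bound ϱ F).mp hFpsd vv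
    have hcs := dot_cs' u z
    have hc : 0 < q₀ * ϱ ^ 2 := by positivity
    have ham := amgm_dot (q₀ * ϱ ^ 2) (u ⬝ᵥ u) (z ⬝ᵥ z) (u ⬝ᵥ z) hc
      (dot_self_nonneg' u) (dot_self_nonneg' z) hcs
    have hdiv : z ⬝ᵥ z / (q₀ * ϱ ^ 2) ≤ (1 / q₀) * (vv ⬝ᵥ vv) := by
      rw [div_le_iff₀ hc]
      have heq : 1 / q₀ * (vv ⬝ᵥ vv) * (q₀ * ϱ ^ 2) = ϱ ^ 2 * (vv ⬝ᵥ vv) := by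
        field_simp
      rw [heq]; exact hzb
    have hq1 := quad_eval F x
    rw [← hvvdef, ← hzdef] at hq1
    have hTz : x ⬝ᵥ (T *ᵥ z) = u ⬝ᵥ z := by rw [dot_mul_transpose, hudef]
    rw [hq1, hTz]
    have : x ⬝ᵥ ((P * Aᵀ + A * P) *ᵥ x) + 2 * (u ⬝ᵥ z) < 0 := by linarith
    linarith
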